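/- Let Q be a finite quiver satisfying: every vertex has at most two incoming and at most two outgoing arrows, and there is a set X of paths of length 2 such that (gentle conditions) for any arrow α ending at i and distinct arrows β ≠ γ starting at i, exactly one of αβ, αγ lies in X, and dually. Then every arrow α ∈ Q_1 lies on exactly one maximal path or repeatable cycle: the arrows of Q are partitioned by the maximal nonzero paths in MP(A) and the cycles in Cyc(A) (up to cyclic permutation). -/

import Mathlib

/-- `GentleSucc s t R a b` means that the length-2 path `ab` is composable and is not a
relation, i.e. `ab ≠ 0` in the gentle algebra `A = KQ/⟨X⟩` (`R a b` encodes `ab ∈ X`). -/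
def GentleSucc {V E : Type*} (s t : E → V) (R : E → E → Prop) (a b : E) : Prop :=
  t a = s b ∧ ¬ R a b

/-- A maximal nonzero path (element of `MP(A)`), encoded by its list of arrows: nonempty,
consecutive arrows compose to nonzero paths, and not extendable at either end. -/
def IsMaxPath {E : Type*} (Succ : E → E → Prop) (l : List E) : Prop :=
  l ≠ [] ∧ l.Chain' Succ ∧
    (∀ a ∈ l.head?, ∀ e, ¬ Succ e a) ∧ (∀ a ∈ l.getLast?, ∀ e, ¬ Succ a e)

/-- A repeatable cycle (element of `Cyc(A)` up to cyclic permutation), encoded by its list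
of arrows: nonempty and cyclically composable with all composites nonzero. -/
def IsRepCycle {E : Type*} (Succ : E → E → Prop) (l : List E) : Prop :=
  l ≠ [] ∧ l.Chain' Succ ∧ ∀ a ∈ l.getLast?, ∀ b ∈ l.head?, Succ a b

section Aux

variable {E : Type*} {S : E → E → Prop}

/-- Chains out of a common point, with functional `S`: the shorter is a prefix. -/
lemma chain_prefix_agree (hU : ∀ ⦃a b c⦄, S a b → S a c → b = c) :
    ∀ {u : List E} {e : E} {v : List E}, List.Chain' S (e :: u) → List.Chain' S (e :: v) →
      u.length ≤ v.length → u <+: v := by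
  intro u
  induction u with
  | nil => intro e v _ _ _; exact List.nil_prefix
  | cons a u ih =>
    intro e v hu hv hlen
    match v with
    | [] => simp at hlen
    | b :: v =>
      have hab : a = b := hU (List.isChain_cons_cons.1 hu).1 (List.isChain_cons_cons.1 hv).1
      subst hab
      have := ih (e := a) (List.isChain_cons_cons.1 hu).2 (List.isChain_cons_cons.1 hv).2
        (by simpa using hlen)
      exact (List.prefix_cons_inj a).2 this

lemma ray_unique_aux (hU : ∀ ⦃a b c⦄, S a b → S a c → b = c) {e : E} {u v : List E}
    (hu : List.Chain' S (e :: u)) (hv : List.Chain' S (e :: v))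
    (hmu : ∀ a ∈ (e :: u).getLast?, ∀ x, ¬ S a x)
    (hlen : u.length ≤ v.length) : u = v := by
  have hpre := chain_prefix_agree hU hu hv hlen
  obtain ⟨w, rfl⟩ := hpre
  rcases w with _ | ⟨c, w⟩
  · simp
  · exfalso
    have h1 : (e :: u) ++ (c :: w) = e :: (u ++ c :: w) := by simp
    rw [← h1] at hv
    unfold List.Chain' at hv; rw [List.isChain_append] at hv
    obtain ⟨a, ha⟩ : ∃ a, (e :: u).getLast? = some a := by
      rw [← Option.isSome_iff_exists, List.getLast?_isSome]; simp
    exact hmu a ha c (hv.2.2 a ha c rfl)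

/-- Uniqueness of maximal forward rays out of `e`. -/
lemma ray_unique (hU : ∀ ⦃a b c⦄, S a b → S a c → b = c) {e : E} {u v : List E}
    (hu : List.Chain' S (e :: u)) (hv : List.Chain' S (e :: v))
    (hmu : ∀ a ∈ (e :: u).getLast?, ∀ x, ¬ S a x)
    (hmv : ∀ a ∈ (e :: v).getLast?, ∀ x, ¬ S a x) : u = v := by
  rcases le_total u.length v.length with h | h
  · exact ray_unique_aux hU hu hv hmu h
  · exact (ray_unique_aux hU hv hu hmv h).symm


lemma getLast?_append_cons (p q : List E) (e : E) :
    (p ++ e :: q).getLast? = (e :: q).getLast? := by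
  obtain ⟨a, ha⟩ : ∃ a, (e :: q).getLast? = some a := by
    rw [← Option.isSome_iff_exists, List.getLast?_isSome]; simp
  rw [List.getLast?_append, ha]; rfl

/-- Under `IsMaxPath`, the suffix starting at a member `e` is a maximal forward ray. -/
lemma maxpath_ray {l p q : List E} {e : E} (hl : IsMaxPath S l) (hd : l = p ++ e :: q) :
    List.Chain' S (e :: q) ∧ ∀ a ∈ (e :: q).getLast?, ∀ x, ¬ S a x := by
  obtain ⟨-, hc, -, hlast⟩ := hl
  subst hd
  refine ⟨hc.suffix ⟨p, rfl⟩, ?_⟩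
  intro a ha
  exact hlast a (by rw [getLast?_append_cons] at *; exact ha)

lemma maxpath_reverse {l : List E} (hl : IsMaxPath S l) :
    IsMaxPath (flip S) l.reverse := by
  obtain ⟨hne, hc, hh, hl'⟩ := hl
  refine ⟨by simpa using hne, ?_, ?_, ?_⟩
  · unfold List.Chain'; rw [List.isChain_reverse]; exact hc
  · intro a ha x hx
    rw [List.head?_reverse] at ha
    exact hl' a ha x hx
  · intro a ha x hx
    rw [List.getLast?_reverse] at ha
    exact hh a ha x hx

lemma maxpath_unique (hU : ∀ ⦃a b c⦄, S a b → S a c → b = c)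
    (hI : ∀ ⦃a b c⦄, S a c → S b c → a = b) {l l' : List E} {e : E}
    (hl : IsMaxPath S l) (he : e ∈ l) (hl' : IsMaxPath S l') (he' : e ∈ l') : l = l' := by
  obtain ⟨p, q, rfl⟩ := List.append_of_mem he
  obtain ⟨p', q', rfl⟩ := List.append_of_mem he'
  obtain ⟨hc1, hm1⟩ := maxpath_ray hl rfl
  obtain ⟨hc1', hm1'⟩ := maxpath_ray hl' rfl
  have hq : q = q' := ray_unique hU hc1 hc1' hm1 hm1'
  have hrev : (p ++ e :: q).reverse = q.reverse ++ e :: p.reverse := by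
    simp
  have hrev' : (p' ++ e :: q').reverse = q'.reverse ++ e :: p'.reverse := by
    simp
  obtain ⟨hc2, hm2⟩ := maxpath_ray (maxpath_reverse hl) hrev
  obtain ⟨hc2', hm2'⟩ := maxpath_ray (maxpath_reverse hl') hrev'
  have hflip : ∀ ⦃a b c : E⦄, flip S a b → flip S a c → b = c := fun a b c h1 h2 => hI h1 h2
  have hp : p.reverse = p'.reverse := ray_unique hflip hc2 hc2' hm2 hm2'
  rw [hq, List.reverse_injective hp]

lemma repcycle_rotate {l l' : List E} (h : IsRepCycle S (l ++ l')) :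
    IsRepCycle S (l' ++ l) := by
  rcases l with - | ⟨a, p⟩
  · simpa using h
  rcases l' with - | ⟨b, q⟩
  · simpa using h
  obtain ⟨-, hc, hcyc⟩ := h
  unfold List.Chain' at hc; rw [List.isChain_append] at hc
  obtain ⟨hc1, hc2, hc3⟩ := hc
  obtain ⟨x, hx⟩ : ∃ x, (a :: p).getLast? = some x := by
    rw [← Option.isSome_iff_exists, List.getLast?_isSome]; simp
  obtain ⟨y, hy⟩ : ∃ y, (b :: q).getLast? = some y := by
    rw [← Option.isSome_iff_exists, List.getLast?_isSome]; simp
  have hxb : S x b := hc3 x hx b rfl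
  have hya : S y a := by
    refine hcyc y ?_ a (by simp)
    rw [show ((a :: p ++ b :: q : List E).getLast? = ((a :: p) ++ b :: q).getLast?) from rfl,
      getLast?_append_cons, hy]
    rfl
  refine ⟨by simp, ?_, ?_⟩
  · unfold List.Chain'; rw [List.isChain_append]
    refine ⟨hc2, hc1, ?_⟩
    intro u hu v hv
    rw [hy] at hu
    cases hu
    simp only [List.head?_cons, Option.mem_def, Option.some.injEq] at hv
    subst hv
    exact hya
  · intro u hu v hv
    rw [show ((b :: q) ++ a :: p = (b :: q) ++ a :: p) from rfl,
      getLast?_append_cons (b :: q) p a, hx] at hu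
    cases hu
    simp only [List.cons_append, List.head?_cons, Option.mem_def, Option.some.injEq] at hv
    subst hv
    exact hxb

lemma repcycle_chain_concat {m : List E} {e : E} (h : IsRepCycle S (e :: m)) :
    List.Chain' S (e :: (m ++ [e])) := by
  obtain ⟨-, hc, hcyc⟩ := h
  have : e :: (m ++ [e]) = (e :: m) ++ [e] := by simp
  rw [this]; unfold List.Chain'; rw [List.isChain_append]
  refine ⟨hc, List.isChain_singleton e, ?_⟩
  intro x hx y hy
  simp at hy; subst hy
  exact hcyc x hx e (by simp)

lemma repcycle_head_unique_aux (hU : ∀ ⦃a b c⦄, S a b → S a c → b = c) {e : E} {m m' : List E}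
    (h : IsRepCycle S (e :: m)) (h' : IsRepCycle S (e :: m'))
    (hn' : (e :: m').Nodup) (hle : m.length ≤ m'.length) : m = m' := by
  have hc := repcycle_chain_concat h
  have hc' := repcycle_chain_concat h'
  have hpre : m ++ [e] <+: m' ++ [e] := chain_prefix_agree hU hc hc' (by simp; omega)
  rcases eq_or_lt_of_le hle with heq | hlt
  · have := hpre.eq_of_length (by simp [heq])
    exact (List.append_left_injective [e]) this
  · exfalso
    have hpre2 : m ++ [e] <+: m' :=
      List.prefix_of_prefix_length_le hpre (List.prefix_append m' [e]) (by simp; omega)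
    have : e ∈ m' := hpre2.subset (by simp)
    simp at hn'
    exact hn'.1 this

lemma repcycle_head_unique (hU : ∀ ⦃a b c⦄, S a b → S a c → b = c) {e : E} {m m' : List E}
    (h : IsRepCycle S (e :: m)) (h' : IsRepCycle S (e :: m'))
    (hn : (e :: m).Nodup) (hn' : (e :: m').Nodup) : m = m' := by
  rcases le_total m.length m'.length with hle | hle
  · exact repcycle_head_unique_aux hU h h' hn' hle
  · exact (repcycle_head_unique_aux hU h' h hn hle).symm

lemma repcycle_mem_rotate {l : List E} {e : E} (h : IsRepCycle S l) (he : e ∈ l) :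
    ∃ m, IsRepCycle S (e :: m) ∧ l.IsRotated (e :: m) := by
  obtain ⟨p, q, rfl⟩ := List.append_of_mem he
  refine ⟨q ++ p, ?_, ?_⟩
  · have := repcycle_rotate (l := p) (l' := e :: q) h
    simpa using this
  · have := List.isRotated_append (l := p) (l' := e :: q)
    simpa using this

lemma repcycle_pump {m : List E} {e : E} (h : IsRepCycle S (e :: m)) (n : ℕ) :
    ∃ w : List E, List.Chain' S (e :: w) ∧ n ≤ w.length := by
  induction n with
  | zero => exact ⟨[], List.isChain_singleton e, Nat.zero_le _⟩
  | succ n ih =>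
    obtain ⟨w, hw, hlen⟩ := ih
    refine ⟨m ++ e :: w, ?_, by simp; omega⟩
    have heq : e :: (m ++ e :: w) = (e :: m) ++ (e :: w) := by simp
    rw [heq]; unfold List.Chain'; rw [List.isChain_append]
    refine ⟨h.2.1, hw, ?_⟩
    intro x hx y hy
    simp at hy; subst hy
    exact h.2.2 x hx e (by simp)

lemma path_cycle_disjoint (hU : ∀ ⦃a b c⦄, S a b → S a c → b = c) {l c : List E} {e : E}
    (hl : IsMaxPath S l) (he : e ∈ l) (hc : IsRepCycle S c) (hec : e ∈ c) : False := by
  obtain ⟨m, hm, -⟩ := repcycle_mem_rotate hc hec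
  obtain ⟨p, q, rfl⟩ := List.append_of_mem he
  obtain ⟨hc1, hm1⟩ := maxpath_ray hl rfl
  obtain ⟨w, hw, hlen⟩ := repcycle_pump hm (q.length + 1)
  have hpre : q <+: w := chain_prefix_agree hU hc1 hw (by omega)
  obtain ⟨r, rfl⟩ := hpre
  rcases r with - | ⟨x, r⟩
  · simp at hlen
  · have heq : e :: (q ++ x :: r) = (e :: q) ++ (x :: r) := by simp
    rw [heq] at hw; unfold List.Chain' at hw; rw [List.isChain_append] at hw
    obtain ⟨a, ha⟩ : ∃ a, (e :: q).getLast? = some a := by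
      rw [← Option.isSome_iff_exists, List.getLast?_isSome]; simp
    exact hm1 a ha x (hw.2.2 a ha x rfl)

lemma exists_max_chain [Fintype E] (e : E) :
    ∃ l : List E, l.Nodup ∧ List.Chain' S l ∧ e ∈ l ∧
      ∀ l' : List E, l'.Nodup → List.Chain' S l' → e ∈ l' → l'.length ≤ l.length := by
  classical
  set P : ℕ → Prop := fun n => ∃ l : List E, l.Nodup ∧ List.Chain' S l ∧ e ∈ l ∧ l.length = n
    with hP
  have h1 : P 1 := ⟨[e], by simp, List.isChain_singleton e, by simp, rfl⟩
  have hbd : ∀ n, P n → n ≤ Fintype.card E := by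
    rintro n ⟨l, hn, -, -, rfl⟩; exact hn.length_le_card
  have hcard : 1 ≤ Fintype.card E := Fintype.card_pos_iff.2 ⟨e⟩
  obtain ⟨l, hn, hc, he', hl⟩ := Nat.findGreatest_spec (P := P) hcard h1
  refine ⟨l, hn, hc, he', fun l' h1' h2' h3' => ?_⟩
  have hPl' : P l'.length := ⟨l', h1', h2', h3', rfl⟩
  have := Nat.le_findGreatest (n := Fintype.card E) (hbd _ hPl') hPl'
  omega

lemma exists_maxpath_or_cycle [Fintype E] [DecidableEq E]
    (hU : ∀ ⦃a b c⦄, S a b → S a c → b = c)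
    (hI : ∀ ⦃a b c⦄, S a c → S b c → a = b) (e : E) :
    (∃ l : List E, l.Nodup ∧ IsMaxPath S l ∧ e ∈ l) ∨
      (∃ l : List E, l.Nodup ∧ IsRepCycle S l ∧ e ∈ l) := by
  obtain ⟨l, hn, hc, he, hmax⟩ := exists_max_chain (S := S) e
  have hne : l ≠ [] := by rintro rfl; simp at he
  obtain ⟨a, ha⟩ : ∃ a, l.getLast? = some a := by
    rw [← Option.isSome_iff_exists, List.getLast?_isSome]; simpa using hne
  obtain ⟨b0, hb0⟩ : ∃ b, l.head? = some b := by
    rw [← Option.isSome_iff_exists, List.isSome_head?]; simpa using hne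
  have hamem : a ∈ l := List.mem_of_mem_getLast? ha
  have hbmem0 : b0 ∈ l := List.mem_of_mem_head? hb0
  by_cases hfs : ∃ b, S a b
  · -- l is a repeatable cycle
    right
    obtain ⟨b, hb⟩ := hfs
    have hbmem : b ∈ l := by
      by_contra hbm
      have hnd : (l ++ [b]).Nodup := by
        rw [List.nodup_append]
        refine ⟨hn, List.nodup_singleton b, ?_⟩
        intro x hx y hy hxy
        simp at hy
        subst hy
        subst hxy
        exact hbm hx
      have hch : List.Chain' S (l ++ [b]) := by
        unfold List.Chain'; rw [List.isChain_append]
        refine ⟨hc, List.isChain_singleton b, ?_⟩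
        intro x hx y hy
        rw [ha] at hx; cases hx
        simp at hy; subst hy
        exact hb
      have := hmax _ hnd hch (by simp [he])
      simp at this
    -- b must be the head of l
    obtain ⟨p, q, rfl⟩ := List.append_of_mem hbmem
    have hp : p = [] := by
      rcases p with - | ⟨c, p'⟩
      · rfl
      · exfalso
        obtain ⟨a', ha'⟩ : ∃ a', (c :: p').getLast? = some a' := by
          rw [← Option.isSome_iff_exists, List.getLast?_isSome]; simp
        have hsa' : S a' b := by
          have := hc
          unfold List.Chain' at this; rw [List.isChain_append] at this
          exact this.2.2 a' ha' b rfl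
        have haa : a' = a := hI hsa' hb
        have ha'm : a' ∈ (c :: p' : List E) := List.mem_of_mem_getLast? ha'
        have ham2 : a ∈ b :: q := by
          rw [getLast?_append_cons] at ha
          exact List.mem_of_mem_getLast? ha
        rw [List.nodup_append] at hn
        exact hn.2.2 a' ha'm a' (haa ▸ ham2) rfl
    subst hp
    rw [List.nil_append] at hn hc he ha
    refine ⟨b :: q, hn, ⟨by simp, hc, ?_⟩, he⟩
    intro x hx y hy
    rw [ha] at hx
    have hx' : a = x := by simpa using hx
    have hy' : b = y := by simpa using hy
    rw [← hx', ← hy']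
    exact hb
  · -- l is a maximal path
    left
    have hfs' : ∀ x ∈ l.getLast?, ∀ y, ¬ S x y := by
      intro x hx y hy
      rw [ha] at hx; cases hx
      exact hfs ⟨y, hy⟩
    have hbs : ∀ x ∈ l.head?, ∀ y, ¬ S y x := by
      intro x hx y hy
      have hxb : b0 = x := by rw [hb0] at hx; simpa using hx
      rw [← hxb] at hy
      -- now hy : S y b0
      -- y ∈ l, else we could extend
      have hymem : y ∈ l := by
        by_contra hym
        have hnd : (y :: l).Nodup := by
          rw [List.nodup_cons]; exact ⟨hym, hn⟩
        have hch : List.Chain' S (y :: l) := by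
          rw [show (y :: l = [y] ++ l) by rfl]; unfold List.Chain'; rw [List.isChain_append]
          refine ⟨List.isChain_singleton y, hc, ?_⟩
          intro u hu v hv
          simp at hu; subst hu
          rw [hb0] at hv; cases hv
          exact hy
        have := hmax _ hnd hch (by simp [he])
        simp at this
      obtain ⟨p, q, hlpq⟩ := List.append_of_mem hymem
      rcases q with - | ⟨c, q'⟩
      · -- y is the last element, so S (last) b0, contradicting hfs
        have hgy : l.getLast? = some y := by
          rw [hlpq, getLast?_append_cons]; simp
        have hay : a = y := by rw [ha] at hgy; simpa using hgy
        exact hfs ⟨b0, by rw [hay]; exact hy⟩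
      · -- y has successor c inside the chain; c = b0 by hU; contradiction with nodup
        have hyc : S y c := by
          have hsub : List.Chain' S (y :: c :: q') := hc.suffix (by rw [hlpq]; exact ⟨p, rfl⟩)
          exact (List.isChain_cons_cons.1 hsub).1
        have hcb : c = b0 := hU hyc hy
        rcases p with - | ⟨d, p'⟩
        · rw [List.nil_append] at hlpq
          rw [hlpq] at hb0 hn
          simp only [List.head?_cons, Option.some.injEq] at hb0
          rw [List.nodup_cons] at hn
          have hcy : c = y := hcb.trans hb0.symm
          refine hn.1 ?_
          rw [hcy]
          exact List.mem_cons_self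
        · rw [hlpq] at hb0 hn
          simp only [List.cons_append, List.head?_cons, Option.some.injEq] at hb0
          have hdc : d = c := hb0.trans hcb.symm
          rw [List.nodup_append] at hn
          exact hn.2.2 c (show c ∈ (d :: p' : List E) by rw [← hdc]; simp) c (by simp) rfl
    exact ⟨l, hn, ⟨hne, hc, hbs, hfs'⟩, he⟩

end Aux

theorem stmt_16 {V E : Type*} [DecidableEq V] [DecidableEq E] [Fintype E]
    (s t : E → V) (R : E → E → Prop)
    (hR : ∀ a b, R a b → t a = s b)
    (hout : ∀ v : V, (Finset.univ.filter fun e => s e = v).card ≤ 2)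
    (hin : ∀ v : V, (Finset.univ.filter fun e => t e = v).card ≤ 2)
    (hgd : ∀ a b c : E, b ≠ c → t a = s b → t a = s c → (R a b ↔ ¬ R a c))
    (hge : ∀ a b c : E, b ≠ c → t b = s a → t c = s a → (R b a ↔ ¬ R c a)) :
    ∀ e : E,
      ((∃ l : List E, l.Nodup ∧ IsMaxPath (GentleSucc s t R) l ∧ e ∈ l) ∨
        (∃ l : List E, l.Nodup ∧ IsRepCycle (GentleSucc s t R) l ∧ e ∈ l)) ∧
      (∀ l l' : List E, IsMaxPath (GentleSucc s t R) l → e ∈ l →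
        IsMaxPath (GentleSucc s t R) l' → e ∈ l' → l = l') ∧
      (∀ l l' : List E, l.Nodup → l'.Nodup → IsRepCycle (GentleSucc s t R) l → e ∈ l →
        IsRepCycle (GentleSucc s t R) l' → e ∈ l' → l.IsRotated l') ∧
      (∀ l l' : List E, IsMaxPath (GentleSucc s t R) l → e ∈ l →
        l'.Nodup → IsRepCycle (GentleSucc s t R) l' → e ∉ l') := by
  intro e
  have hU : ∀ ⦃a b c : E⦄, GentleSucc s t R a b → GentleSucc s t R a c → b = c := by
    rintro a b c ⟨h1, h2⟩ ⟨h3, h4⟩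
    by_contra hne
    exact h2 ((hgd a b c hne h1 h3).2 h4)
  have hI : ∀ ⦃a b c : E⦄, GentleSucc s t R a c → GentleSucc s t R b c → a = b := by
    rintro a b c ⟨h1, h2⟩ ⟨h3, h4⟩
    by_contra hne
    exact h2 ((hge c a b hne h1 h3).2 h4)
  refine ⟨exists_maxpath_or_cycle hU hI e, ?_, ?_, ?_⟩
  · intro l l' hl he hl' he'
    exact maxpath_unique hU hI hl he hl' he'
  · intro l l' hn hn' hcy hec hcy' hec'
    obtain ⟨m, hm, hr⟩ := repcycle_mem_rotate hcy hec
    obtain ⟨m', hm', hr'⟩ := repcycle_mem_rotate hcy' hec'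
    have hnm : (e :: m).Nodup := hr.perm.nodup_iff.1 hn
    have hnm' : (e :: m').Nodup := hr'.perm.nodup_iff.1 hn'
    have heq := repcycle_head_unique hU hm hm' hnm hnm'
    rw [heq] at hr
    exact hr.trans hr'.symm
  · intro l l' hl he hn' hcy' he'
    exact path_cycle_disjoint hU hl he hcy' he'
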